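/- If X is an additive process with distributions μ_t, and X is semi-Lévy with period p (i.e., X_{t+p} − X_{s+p} equals X_t − X_s in distribution for all 0 ≤ s ≤ t), then μ_{np+t} = μ_p^{*n} * μ_t for all n ∈ ℕ and t ≥ 0, where μ_p^{*n} denotes the n-fold convolution of μ_p. -/

import Mathlib

open MeasureTheory ProbabilityTheory

/-- `n`-fold convolution power of a measure on `ℝ`. -/
noncomputable def convPow (μ : MeasureTheory.Measure ℝ) : ℕ → MeasureTheory.Measure ℝ
  | 0 => MeasureTheory.Measure.dirac 0
  | n + 1 => MeasureTheory.Measure.conv (convPow μ n) μ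

/-- The law of the sum of two independent random variables is the convolution of laws. -/
lemma map_add_conv_aux {Ω : Type*} [MeasurableSpace Ω] {P : Measure Ω} [IsProbabilityMeasure P]
    {f g : Ω → ℝ} (hf : Measurable f) (hg : Measurable g) (h : IndepFun f g P) :
    P.map (fun ω => f ω + g ω) = Measure.conv (P.map f) (P.map g) := by
  rw [Measure.conv,
    ← (indepFun_iff_map_prod_eq_prod_map_map hf.aemeasurable hg.aemeasurable).mp h,
    Measure.map_map (by fun_prop) (by fun_prop)]
  rfl

/-- If `X` is an additive process (starting at `0`, with independent
increments) with laws `μ t = law of X t`, and `X` is semi-Lévy with period `p`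
(`X (t+p) - X (s+p)` equals `X t - X s` in distribution for all `0 ≤ s ≤ t`), then
`μ (n p + t) = μ p ^{*n} ∗ μ t` for all `n ∈ ℕ` and `t ≥ 0`. -/
theorem semiLevy_law_conv
    {Ω : Type*} [MeasurableSpace Ω] (P : Measure Ω) [IsProbabilityMeasure P]
    (X : ℝ → Ω → ℝ) (p : ℝ) (hp : 0 < p)
    (hmeas : ∀ t, Measurable (X t))
    (h0 : ∀ᵐ ω ∂P, X 0 ω = 0)
    (hindep : ∀ (n : ℕ) (t : Fin (n + 1) → ℝ), Monotone t → (∀ i, 0 ≤ t i) →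
      iIndepFun
        (fun i : Fin n => fun ω => X (t i.succ) ω - X (t i.castSucc) ω) P)
    (hsemi : ∀ s t : ℝ, 0 ≤ s → s ≤ t →
      Measure.map (fun ω => X (t + p) ω - X (s + p) ω) P
        = Measure.map (fun ω => X t ω - X s ω) P)
    (μ : ℝ → Measure ℝ) (hμ : ∀ t, μ t = Measure.map (X t) P) :
    ∀ (n : ℕ) (t : ℝ), 0 ≤ t →
      μ (n * p + t) = MeasureTheory.Measure.conv (convPow (μ p) n) (μ t) := by
  -- iterated shift invariance
  have hshift : ∀ (n : ℕ) (s t : ℝ), 0 ≤ s → s ≤ t →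
      P.map (fun ω => X (t + n * p) ω - X (s + n * p) ω)
        = P.map (fun ω => X t ω - X s ω) := by
    intro n
    induction n with
    | zero => intro s t _ _; simp
    | succ n ih =>
      intro s t hs hst
      have h1 : (t + (n + 1 : ℕ) * p) = (t + n * p) + p := by push_cast; ring
      have h2 : (s + (n + 1 : ℕ) * p) = (s + n * p) + p := by push_cast; ring
      rw [h1, h2, hsemi (s + n * p) (t + n * p)
        (by positivity) (by linarith), ih s t hs hst]
  -- independence of X s and the increment
  have hind2 : ∀ s t : ℝ, 0 ≤ s → s ≤ t →
      IndepFun (X s) (fun ω => X t ω - X s ω) P := by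
    intro s t hs hst
    have hmono : Monotone (![0, s, t] : Fin 3 → ℝ) := by
      intro a b hab
      fin_cases a <;> fin_cases b <;>
        simp_all [Fin.le_def] <;> linarith
    have hnn : ∀ i, 0 ≤ (![0, s, t] : Fin 3 → ℝ) i := by
      intro i; fin_cases i <;> simp <;> linarith
    have h := hindep 2 ![0, s, t] hmono hnn
    have h01 := h.indepFun (i := 0) (j := 1) (by decide)
    have he : (fun ω => X (![0, s, t] (0 : Fin 2).succ) ω
        - X (![0, s, t] (0 : Fin 2).castSucc) ω) =ᵐ[P] X s := by
      filter_upwards [h0] with ω hω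
      simp [show ((0 : Fin 2).succ : Fin 3) = 1 from rfl,
        show ((0 : Fin 2).castSucc : Fin 3) = 0 from rfl, hω]
    have he2 : (fun ω => X (![0, s, t] (1 : Fin 2).succ) ω
        - X (![0, s, t] (1 : Fin 2).castSucc) ω) =ᵐ[P] (fun ω => X t ω - X s ω) := by
      filter_upwards with ω
      simp [show ((1 : Fin 2).succ : Fin 3) = 2 from rfl,
        show ((1 : Fin 2).castSucc : Fin 3) = 1 from rfl]
    exact h01.congr he he2
  -- decomposition: μ t = μ s ∗ law of increment
  have hdecomp : ∀ s t : ℝ, 0 ≤ s → s ≤ t →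
      μ t = Measure.conv (μ s) (P.map (fun ω => X t ω - X s ω)) := by
    intro s t hs hst
    have hfun : X t = fun ω => X s ω + (X t ω - X s ω) := by
      funext ω; ring
    calc μ t = P.map (fun ω => X s ω + (X t ω - X s ω)) := by rw [hμ t]; exact congrArg (fun f => Measure.map f P) hfun
      _ = Measure.conv (P.map (X s)) (P.map (fun ω => X t ω - X s ω)) :=
        map_add_conv_aux (hmeas s) ((hmeas t).sub (hmeas s)) (hind2 s t hs hst)
      _ = _ := by rw [hμ s]
  -- law at time 0 is dirac 0
  have hμ0 : μ 0 = Measure.dirac 0 := by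
    rw [hμ 0, Measure.map_congr (g := fun _ => (0 : ℝ)) h0]
    simp [Measure.map_const]
  -- increment law over a full period block
  have hinc : ∀ (n : ℕ) (t : ℝ), 0 ≤ t →
      P.map (fun ω => X (↑n * p + t) ω - X (↑n * p) ω) = μ t := by
    intro n t ht
    have h1 : (n : ℝ) * p + t = t + n * p := by ring
    have hs := hshift n 0 t le_rfl ht
    rw [zero_add] at hs
    rw [h1, hs, hμ t]
    apply Measure.map_congr
    filter_upwards [h0] with ω hω
    simp [hω]
  -- law at multiples of the period
  have hpow : ∀ n : ℕ, μ (n * p) = convPow (μ p) n := by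
    intro n
    induction n with
    | zero => simpa [convPow] using hμ0
    | succ n ih =>
      have h1 : ((n + 1 : ℕ) : ℝ) * p = (n : ℝ) * p + p := by push_cast; ring
      rw [h1, hdecomp ((n : ℝ) * p) ((n : ℝ) * p + p) (by positivity) (by linarith),
        hinc n p hp.le, ih]
      rfl
  intro n t ht
  rw [hdecomp ((n : ℝ) * p) ((n : ℝ) * p + t) (by positivity) (by linarith),
    hinc n t ht, hpow n]
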